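/- Define σ_k^{(t)}(r) = t·sinh(√k·t·r)/(t·r)·(r/sinh(√k·r)) for k > 0, i.e. σ_k^{(t)}(r) = sinh(√k·t·r)/sinh(√k·r) (with k = -K/N > 0 corresponding to K < 0). Then for t1, t2, t3 ∈ [0,1] with t1 < t2 and r ≥ 0 with r > 0: σ^{((1-t3)t1 + t3·t2)}(r) = σ^{(1-t3)}((t2-t1)·r) · σ^{(t1)}(r) + σ^{(t3)}((t2-t1)·r) · σ^{(t2)}(r). -/

import Mathlib

theorem sigma_composition_identity
    (c r t1 t2 t3 : ℝ) (hc : 0 < c) (hr : 0 < r)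
    (h1 : t1 ∈ Set.Icc (0:ℝ) 1) (h2 : t2 ∈ Set.Icc (0:ℝ) 1)
    (h3 : t3 ∈ Set.Icc (0:ℝ) 1) (h12 : t1 < t2)
    (σ : ℝ → ℝ → ℝ)
    (hσ : ∀ t s, σ t s = Real.sinh (c * t * s) / Real.sinh (c * s)) :
    σ ((1 - t3) * t1 + t3 * t2) r =
      σ (1 - t3) ((t2 - t1) * r) * σ t1 r + σ t3 ((t2 - t1) * r) * σ t2 r := by
  have key : ∀ x p q : ℝ,
      Real.sinh (x + q) * Real.sinh (p + q) =
        Real.sinh p * Real.sinh x + Real.sinh q * Real.sinh (x + p + q) := by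
    intro x p q
    simp only [Real.sinh_add, Real.cosh_add]
    linear_combination Real.sinh x * Real.sinh p * Real.cosh_sq q
  set x := c * t1 * r with hx
  set p := c * (1 - t3) * (t2 - t1) * r with hp
  set q := c * t3 * (t2 - t1) * r with hq
  have e1 : c * ((1 - t3) * t1 + t3 * t2) * r = x + q := by rw [hx, hq]; ring
  have e2 : c * (1 - t3) * ((t2 - t1) * r) = p := by rw [hp]; ring
  have e3 : c * t3 * ((t2 - t1) * r) = q := by rw [hq]; ring
  have e4 : c * t2 * r = x + p + q := by rw [hx, hp, hq]; ring
  have e5 : c * ((t2 - t1) * r) = p + q := by rw [hp, hq]; ring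
  have hcr : Real.sinh (c * r) ≠ 0 := by
    have : 0 < c * r := by positivity
    exact ne_of_gt (by simpa using Real.sinh_pos_iff.mpr this)
  have hpq : Real.sinh (p + q) ≠ 0 := by
    have : 0 < p + q := by
      rw [hp, hq]
      have : 0 < c * (t2 - t1) * r := by
        have := sub_pos.mpr h12
        positivity
      nlinarith
    exact ne_of_gt (Real.sinh_pos_iff.mpr this)
  simp only [hσ, e1, e2, e3, e4, e5]
  field_simp
  linear_combination key x p q - Real.sinh p * congrArg Real.sinh (show c * r * t1 = x by rw [hx]; ring)
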